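/- Let σ_{AB} be a two-qubit density operator and let σ̂_{AB} = (1/4) Σ_{s,t∈F₂} (XZ(s,t)⊗XZ(s,t)) σ_{AB} (XZ(s,t)⊗XZ(s,t))† be its discrete twirl, where XZ(s,t) = Xˢ Zᵗ are Pauli operators. Then σ̂_{AB} is Bell-diagonal: σ̂_{AB} = Σ_{x,z∈F₂} P(x,z) |ψ(x,z)⟩⟨ψ(x,z)|, where P(x,z) = ⟨ψ(x,z)| σ_{AB} |ψ(x,z)⟩ and |ψ(x,z)⟩ = (1/√2)(|0⟩|x⟩ + (−1)ᶻ|1⟩|1+x⟩) are the Bell states. -/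

import Mathlib

open scoped Classical ComplexOrder
open Kronecker Matrix

/-- The Pauli bit-flip operator `X` on a qubit. -/
noncomputable def pauliX : Matrix (ZMod 2) (ZMod 2) ℂ :=
  Matrix.of fun i j => if i = j + 1 then 1 else 0

/-- The Pauli phase-flip operator `Z` on a qubit. -/
noncomputable def pauliZ : Matrix (ZMod 2) (ZMod 2) ℂ :=
  Matrix.of fun i j => if i = j then (if i = 1 then -1 else 1) else 0

/-- The Pauli operator `XZ(s,t) = Xˢ Zᵗ`. -/
noncomputable def pauliXZ (s t : ZMod 2) : Matrix (ZMod 2) (ZMod 2) ℂ :=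
  pauliX ^ s.val * pauliZ ^ t.val

/-- The Bell state `|ψ(x,z)⟩ = (1/√2)(|0⟩|x⟩ + (−1)ᶻ|1⟩|1+x⟩)`. -/
noncomputable def bell (x z : ZMod 2) : ZMod 2 × ZMod 2 → ℂ :=
  fun p => ((Real.sqrt 2)⁻¹ : ℝ) *
    ((if p = (0, x) then 1 else 0) +
      (if z = 1 then -1 else 1) * (if p = (1, 1 + x) then 1 else 0))

lemma zsum {M : Type*} [AddCommMonoid M] (f : ZMod 2 → M) : ∑ i, f i = f 0 + f 1 :=
  Fin.sum_univ_two f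

lemma zcases (a : ZMod 2) : a = 0 ∨ a = 1 := by
  fin_cases a
  · exact Or.inl rfl
  · exact Or.inr rfl

def sgn (t j : ZMod 2) : ℂ := (-1 : ℂ) ^ (t.val * j.val)

lemma pauliXZ_apply (s t i j : ZMod 2) :
    pauliXZ s t i j = if j = i + s then sgn t j else 0 := by
  rcases zcases s with rfl | rfl <;> rcases zcases t with rfl | rfl <;>
    rcases zcases i with rfl | rfl <;> rcases zcases j with rfl | rfl <;>
    norm_num [pauliXZ, pauliX, pauliZ, sgn, Matrix.mul_apply, zsum,
      show (ZMod.val (0 : ZMod 2)) = 0 from rfl, show (ZMod.val (1 : ZMod 2)) = 1 from rfl,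
      Matrix.one_apply, show (1 + 1 : ZMod 2) = 0 from rfl] <;> decide

lemma kron_apply (s t : ZMod 2) (p a : ZMod 2 × ZMod 2) :
    (pauliXZ s t ⊗ₖ pauliXZ s t) p a =
      if a = (p.1 + s, p.2 + s) then sgn t a.1 * sgn t a.2 else 0 := by
  obtain ⟨a1, a2⟩ := a
  simp only [Matrix.kroneckerMap_apply, pauliXZ_apply, Prod.mk.injEq, ite_and]
  split_ifs with h1 h2 h2 <;> simp_all <;> ring

lemma star_sgn (t j : ZMod 2) : star (sgn t j) = sgn t j := by
  simp [sgn]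

lemma conj_apply (s t : ZMod 2) (σ : Matrix ((ZMod 2 × ZMod 2)) ((ZMod 2 × ZMod 2)) ℂ)
    (p q : ZMod 2 × ZMod 2) :
    ((pauliXZ s t ⊗ₖ pauliXZ s t) * σ * (pauliXZ s t ⊗ₖ pauliXZ s t)ᴴ) p q =
      (sgn t (p.1 + s) * sgn t (p.2 + s) * (sgn t (q.1 + s) * sgn t (q.2 + s))) *
        σ (p.1 + s, p.2 + s) (q.1 + s, q.2 + s) := by
  simp only [Matrix.mul_apply, Matrix.conjTranspose_apply, kron_apply, ite_mul, mul_ite,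
    zero_mul, mul_zero, apply_ite star, star_zero, star_mul', star_sgn,
    Finset.sum_ite_eq', Finset.mem_univ, if_true]
  ring

lemma csq : (((Real.sqrt 2)⁻¹ : ℝ) : ℂ) * (((Real.sqrt 2)⁻¹ : ℝ) : ℂ) = 1/2 := by
  rw [← Complex.ofReal_mul, ← mul_inv, Real.mul_self_sqrt (by norm_num)]
  norm_num

set_option maxHeartbeats 2000000 in
/-- The discrete twirl `(1/4) Σ_{s,t} (XZ(s,t)⊗XZ(s,t)) σ (XZ(s,t)⊗XZ(s,t))†` of any
two-qubit density operator is Bell-diagonal with coefficients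
`P(x,z) = ⟨ψ(x,z)|σ|ψ(x,z)⟩`. -/
theorem discrete_twirl_is_bell_diagonal
    (σ : Matrix ((ZMod 2 × ZMod 2)) ((ZMod 2 × ZMod 2)) ℂ)
    (hσ : σ.PosSemidef) (htr : σ.trace = 1) :
    ((1 / 4 : ℂ) • ∑ s : ZMod 2, ∑ t : ZMod 2,
        (pauliXZ s t ⊗ₖ pauliXZ s t) * σ * (pauliXZ s t ⊗ₖ pauliXZ s t)ᴴ) =
      ∑ x : ZMod 2, ∑ z : ZMod 2,
        (∑ p, ∑ q, star (bell x z p) * σ p q * bell x z q) •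
          (Matrix.of fun p q => bell x z p * star (bell x z q)) := by
  have c2 : (((Real.sqrt 2)⁻¹ : ℝ) : ℂ) ^ 2 = 1/2 := by
    rw [sq]; exact csq
  have c4 : (((Real.sqrt 2)⁻¹ : ℝ) : ℂ) ^ 4 = 1/4 := by
    rw [show (4:ℕ) = 2*2 from rfl, pow_mul, c2]; norm_num
  ext ⟨p1, p2⟩ ⟨q1, q2⟩
  simp only [Matrix.smul_apply, Matrix.sum_apply, zsum, Matrix.add_apply, conj_apply,
    Matrix.of_apply, Fintype.sum_prod_type, smul_eq_mul, bell, Complex.star_def,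
    _root_.map_mul, _root_.map_add, _root_.map_one, _root_.map_neg, _root_.map_zero,
    apply_ite (starRingEnd ℂ), Complex.conj_ofReal]
  rcases zcases p1 with rfl | rfl <;> rcases zcases p2 with rfl | rfl <;>
    rcases zcases q1 with rfl | rfl <;> rcases zcases q2 with rfl | rfl <;>
  · simp only [Fin.zero_eta, Fin.mk_one, sgn, Prod.mk.injEq, show (1 + 1 : ZMod 2) = 0 from rfl, add_zero, zero_add,
      show (ZMod.val (0 : ZMod 2)) = 0 from rfl, show (ZMod.val (1 : ZMod 2)) = 1 from rfl,
      eq_self_iff_true, zero_ne_one, one_ne_zero, and_true, true_and, and_false, false_and,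
      if_true, if_false, ite_true, ite_false, Nat.mul_zero, Nat.zero_mul, Nat.mul_one,
      pow_zero, pow_one, mul_one, one_mul, mul_zero, zero_mul, neg_neg, mul_neg, neg_mul]
    try ring_nf
    try simp only [c2, c4]
    try ring
    try norm_num
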